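/- Integral bound: let c > 1, γ ≥ 0 and 0 ≤ t₀ < T. Then ∫_{t₀}^{T} (γ e^{-w/2} − 1) / (1 + (c − 1) e^{-w}) dw ≤ 2γ − (T − t₀) + log(1 + (c − 1) e^{-t₀}). -/

import Mathlib

open MeasureTheory intervalIntegral

/-- integral bound. -/
theorem integral_bound (c γ t₀ T : ℝ) (hc : 1 < c) (hγ : 0 ≤ γ)
    (ht₀ : 0 ≤ t₀) (hT : t₀ < T) :
    (∫ w in t₀..T, (γ * Real.exp (-w / 2) - 1) / (1 + (c - 1) * Real.exp (-w)))
      ≤ 2 * γ - (T - t₀) + Real.log (1 + (c - 1) * Real.exp (-t₀)) := by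
  have hd0 : 0 < c - 1 := by linarith
  have hD : ∀ w : ℝ, 0 < 1 + (c - 1) * Real.exp (-w) := fun w => by positivity
  set f : ℝ → ℝ := fun w => γ * Real.exp (-w/2) - 1
      + (c - 1) * Real.exp (-w) / (1 + (c - 1) * Real.exp (-w)) with hf
  set F : ℝ → ℝ := fun w => -(2*γ) * Real.exp (-w/2) - w
      - Real.log (1 + (c - 1) * Real.exp (-w)) with hF
  have hderiv : ∀ w : ℝ, HasDerivAt F (f w) w := by
    intro w
    have h1 : HasDerivAt (fun w : ℝ => Real.exp (-w/2)) (Real.exp (-w/2) * (-1/2)) w := by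
      have := (Real.hasDerivAt_exp (-w/2)).comp w ((hasDerivAt_id w).neg.div_const 2)
      exact this
    have h2 : HasDerivAt (fun w : ℝ => 1 + (c - 1) * Real.exp (-w))
        ((c - 1) * (-Real.exp (-w))) w := by
      have := ((Real.hasDerivAt_exp (-w)).comp w (hasDerivAt_id w).neg).const_mul (c - 1)
      simpa using this.const_add 1
    have h3 : HasDerivAt (fun w : ℝ => Real.log (1 + (c - 1) * Real.exp (-w)))
        ((c - 1) * (-Real.exp (-w)) / (1 + (c - 1) * Real.exp (-w))) w :=
      h2.log (ne_of_gt (hD w))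
    have h4 := ((h1.const_mul (-(2*γ))).sub (hasDerivAt_id w)).sub h3
    refine h4.congr_deriv ?_
    simp only [hf, id]
    ring
  have hcont_f : Continuous f := by
    apply Continuous.add
    · continuity
    · exact (continuous_const.mul (Real.continuous_exp.comp continuous_neg)).div
        (continuous_const.add (continuous_const.mul (Real.continuous_exp.comp continuous_neg)))
        (fun w => ne_of_gt (hD w))
  have hcont_g : Continuous (fun w : ℝ =>
      (γ * Real.exp (-w / 2) - 1) / (1 + (c - 1) * Real.exp (-w))) := by
    apply Continuous.div
    · continuity
    · continuity
    · exact fun w => ne_of_gt (hD w)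
  have hintF : (∫ w in t₀..T, f w) = F T - F t₀ :=
    integral_eq_sub_of_hasDerivAt (fun w _ => hderiv w) (hcont_f.intervalIntegrable t₀ T)
  have hmono : (∫ w in t₀..T, (γ * Real.exp (-w / 2) - 1) / (1 + (c - 1) * Real.exp (-w)))
      ≤ ∫ w in t₀..T, f w := by
    apply intervalIntegral.integral_mono_on hT.le
      (hcont_g.intervalIntegrable t₀ T) (hcont_f.intervalIntegrable t₀ T)
    intro w _
    rw [div_le_iff₀ (hD w)]
    have hE := (Real.exp_pos (-w)).le
    have hE2 := (Real.exp_pos (-w/2)).le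
    have hDw := hD w
    simp only [hf]
    have key : (γ * Real.exp (-w/2) - 1
        + (c - 1) * Real.exp (-w) / (1 + (c - 1) * Real.exp (-w)))
        * (1 + (c - 1) * Real.exp (-w))
        = (γ * Real.exp (-w / 2) - 1)
          + γ * Real.exp (-w/2) * ((c - 1) * Real.exp (-w)) := by
      field_simp
      ring
    rw [key]
    nlinarith [mul_nonneg (mul_nonneg hγ hE2) (mul_nonneg hd0.le hE)]
  have hlog : 0 ≤ Real.log (1 + (c - 1) * Real.exp (-T)) := by
    apply Real.log_nonneg
    nlinarith [(Real.exp_pos (-T)).le]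
  have hEt : Real.exp (-t₀/2) ≤ 1 := Real.exp_le_one_iff.mpr (by linarith)
  have hET := (Real.exp_pos (-T/2)).le
  calc (∫ w in t₀..T, (γ * Real.exp (-w / 2) - 1) / (1 + (c - 1) * Real.exp (-w)))
      ≤ F T - F t₀ := hintF ▸ hmono
    _ ≤ 2 * γ - (T - t₀) + Real.log (1 + (c - 1) * Real.exp (-t₀)) := by
        simp only [hF]
        nlinarith [mul_nonneg hγ hET]
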